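/- Let G be a finite group, let g, h ∈ G, and let k be a positive integer. Let u = b_k(h̃,g) = h^k + h̃·g·(1-h) be a Bovdi unit and v = b(h̃,g) = 1 + h̃·g·(1-h) the corresponding bicyclic unit in ℤG. Then the subgroup ⟨u, v^{-1}·u·v⟩ of the unit group U(ℤG) is abelian-by-finite (it has an abelian normal subgroup of finite index) and solvable of derived length at most 2. -/

import Mathlib

set_option linter.unusedSectionVars false

/-- `h̃ = ∑_{x ∈ ⟨h⟩} x` in the group ring `R G`, written as `∑_{i < o(h)} h^i`. -/
noncomputable def grpTilde (R : Type*) [CommRing R] {G : Type*} [Group G] (h : G) :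
    MonoidAlgebra R G :=
  ∑ i ∈ Finset.range (orderOf h), MonoidAlgebra.of R G (h ^ i)

/-- Bovdi unit `b_k(g, h̃) = h^k + (1 - h)·g·h̃`. -/
noncomputable def bovdiL (R : Type*) [CommRing R] {G : Type*} [Group G] (g h : G) (k : ℕ) :
    MonoidAlgebra R G :=
  MonoidAlgebra.of R G (h ^ k) +
    (1 - MonoidAlgebra.of R G h) * MonoidAlgebra.of R G g * grpTilde R h

/-- Bovdi unit `b_k(h̃, g) = h^k + h̃·g·(1 - h)`. -/
noncomputable def bovdiR (R : Type*) [CommRing R] {G : Type*} [Group G] (g h : G) (k : ℕ) :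
    MonoidAlgebra R G :=
  MonoidAlgebra.of R G (h ^ k) +
    grpTilde R h * MonoidAlgebra.of R G g * (1 - MonoidAlgebra.of R G h)

section aux
open MonoidAlgebra
variable {G : Type*} [Group G] [Fintype G] (h : G)

lemma of_mul_tilde : of ℤ G h * grpTilde ℤ h = grpTilde ℤ h := by
  unfold grpTilde
  rw [Finset.mul_sum]
  simp only [← map_mul, ← pow_succ']
  have e1 := Finset.sum_range_succ' (fun i => of ℤ G (h ^ i)) (orderOf h)
  rw [Finset.sum_range_succ (fun i => of ℤ G (h ^ i)) (orderOf h)] at e1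
  simp only [pow_orderOf_eq_one, pow_zero] at e1
  exact (add_right_cancel e1).symm

lemma of_pow_mul_tilde (m : ℕ) : of ℤ G (h ^ m) * grpTilde ℤ h = grpTilde ℤ h := by
  induction m with
  | zero => rw [pow_zero, map_one, one_mul]
  | succ m ih => rw [pow_succ', map_mul, mul_assoc, ih, of_mul_tilde]

lemma of_zpow_mul_tilde (j : ℤ) : of ℤ G (h ^ j) * grpTilde ℤ h = grpTilde ℤ h := by
  have hne : (orderOf h : ℤ) ≠ 0 := Int.natCast_ne_zero.mpr (orderOf_pos h).ne'
  have : h ^ j = h ^ ((j % (orderOf h : ℤ)).toNat) := by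
    rw [← zpow_natCast, Int.toNat_of_nonneg (Int.emod_nonneg j hne), zpow_mod_orderOf]
  rw [this, of_pow_mul_tilde]

lemma tilde_mul_of_zpow (j : ℤ) : grpTilde ℤ h * of ℤ G (h ^ j) = grpTilde ℤ h := by
  have : grpTilde ℤ h * of ℤ G (h ^ j) = of ℤ G (h ^ j) * grpTilde ℤ h := by
    unfold grpTilde
    rw [Finset.sum_mul, Finset.mul_sum]
    exact Finset.sum_congr rfl fun i _ => by
      rw [← map_mul, ← map_mul, (((Commute.refl h).zpow_right j).pow_left i).eq]
  rw [this, of_zpow_mul_tilde]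

lemma tilde_mul_tilde : grpTilde ℤ h * grpTilde ℤ h = (orderOf h) • grpTilde ℤ h := by
  nth_rewrite 1 [grpTilde]
  rw [Finset.sum_mul]
  simp only [of_pow_mul_tilde]
  rw [Finset.sum_const, Finset.card_range]

lemma one_sub_of_mul_tilde : (1 - of ℤ G h) * grpTilde ℤ h = 0 := by
  rw [sub_mul, one_mul, of_mul_tilde, sub_self]

lemma nsmul_cancel (x : MonoidAlgebra ℤ G) {n : ℕ} (hn : 0 < n) (hx : n • x = 0) : x = 0 := by
  have h2 : (n : ℤ) • x = 0 := by rw [Nat.cast_smul_eq_nsmul]; exact hx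
  refine MonoidAlgebra.ext (Finsupp.ext fun a => ?_)
  have h4 := congrArg (fun f : MonoidAlgebra ℤ G => f.coeff a) h2
  simp only [MonoidAlgebra.coeff_smul_apply, MonoidAlgebra.coeff_zero, smul_eq_mul, Finsupp.coe_zero, Pi.zero_apply] at h4
  exact (mul_eq_zero.mp h4).resolve_left (by exact_mod_cast hn.ne')

/-- Membership predicate for the square-zero "ideal-like" set `h̃·ℤG·(1-h)` (relaxed form). -/
def Jmem (x : MonoidAlgebra ℤ G) : Prop :=
  (∃ c, x = grpTilde ℤ h * c) ∧ x * grpTilde ℤ h = 0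

variable {h}

lemma Jmem.zero : Jmem h (0 : MonoidAlgebra ℤ G) := ⟨⟨0, by rw [mul_zero]⟩, by rw [zero_mul]⟩

lemma Jmem.add {x y : MonoidAlgebra ℤ G} (hx : Jmem h x) (hy : Jmem h y) : Jmem h (x + y) := by
  obtain ⟨c, hc⟩ := hx.1; obtain ⟨d, hd⟩ := hy.1
  exact ⟨⟨c + d, by rw [hc, hd, mul_add]⟩, by rw [add_mul, hx.2, hy.2, add_zero]⟩

lemma Jmem.neg {x : MonoidAlgebra ℤ G} (hx : Jmem h x) : Jmem h (-x) := by
  obtain ⟨c, hc⟩ := hx.1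
  exact ⟨⟨-c, by rw [hc, mul_neg]⟩, by rw [neg_mul, hx.2, neg_zero]⟩

lemma Jmem.mul_eq_zero {x y : MonoidAlgebra ℤ G} (hx : Jmem h x) (hy : Jmem h y) :
    x * y = 0 := by
  obtain ⟨d, hd⟩ := hy.1
  rw [hd, ← mul_assoc, hx.2, zero_mul]

lemma Jmem.of_zpow_mul {x : MonoidAlgebra ℤ G} (hx : Jmem h x) (j : ℤ) :
    of ℤ G (h ^ j) * x = x := by
  obtain ⟨c, hc⟩ := hx.1
  rw [hc, ← mul_assoc, of_zpow_mul_tilde]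

lemma Jmem.mul_of_zpow {x : MonoidAlgebra ℤ G} (hx : Jmem h x) (j : ℤ) :
    Jmem h (x * of ℤ G (h ^ j)) := by
  obtain ⟨c, hc⟩ := hx.1
  exact ⟨⟨c * of ℤ G (h ^ j), by rw [hc, mul_assoc]⟩,
    by rw [mul_assoc, of_zpow_mul_tilde, hx.2]⟩

lemma Jmem.base (y : MonoidAlgebra ℤ G) :
    Jmem h (grpTilde ℤ h * y * (1 - of ℤ G h)) :=
  ⟨⟨y * (1 - of ℤ G h), by rw [mul_assoc]⟩,
    by rw [mul_assoc, mul_assoc, one_sub_of_mul_tilde, mul_zero, mul_zero]⟩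

lemma Jmem.tilde_mul {x : MonoidAlgebra ℤ G} (hx : Jmem h x) :
    grpTilde ℤ h * x = (orderOf h) • x := by
  obtain ⟨c, hc⟩ := hx.1
  rw [hc, ← mul_assoc, tilde_mul_tilde, smul_mul_assoc]

lemma exp_unique {i j : ℤ} {a b : MonoidAlgebra ℤ G} (ha : Jmem h a) (hb : Jmem h b)
    (e : of ℤ G (h ^ i) + a = of ℤ G (h ^ j) + b) : h ^ i = h ^ j := by
  have e2 := congrArg (fun z => grpTilde ℤ h * z) e
  simp only [mul_add, tilde_mul_of_zpow, ha.tilde_mul, hb.tilde_mul] at e2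
  have e3 : (orderOf h) • a = (orderOf h) • b := add_left_cancel e2
  have e4 : a = b := by
    have : (orderOf h) • (a - b) = 0 := by rw [smul_sub, e3, sub_self]
    have := nsmul_cancel _ (orderOf_pos h) this
    exact sub_eq_zero.mp this
  rw [e4] at e
  exact MonoidAlgebra.of_injective (add_right_cancel e)

lemma mul_repr {j1 j2 : ℤ} {a b : MonoidAlgebra ℤ G} (ha : Jmem h a) (hb : Jmem h b) :
    (of ℤ G (h ^ j1) + a) * (of ℤ G (h ^ j2) + b) =
      of ℤ G (h ^ (j1 + j2)) + (a * of ℤ G (h ^ j2) + b) := by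
  rw [add_mul, mul_add, mul_add, hb.of_zpow_mul j1, ha.mul_eq_zero hb, add_zero,
    ← map_mul, ← zpow_add]
  abel

variable (h)

/-- The subgroup of units of the form `h^j + (element of J)`. -/
def Kgrp : Subgroup (MonoidAlgebra ℤ G)ˣ where
  carrier := {w | ∃ j : ℤ, ∃ a, Jmem h a ∧ (↑w : MonoidAlgebra ℤ G) = of ℤ G (h ^ j) + a}
  one_mem' := ⟨0, 0, Jmem.zero, by rw [zpow_zero, map_one, add_zero, Units.val_one]⟩
  mul_mem' := by
    rintro w1 w2 ⟨j1, a, ha, h1⟩ ⟨j2, b, hb, h2⟩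
    exact ⟨j1 + j2, a * of ℤ G (h ^ j2) + b, (ha.mul_of_zpow j2).add hb,
      by rw [Units.val_mul, h1, h2, mul_repr ha hb]⟩
  inv_mem' := by
    rintro w ⟨j, a, ha, hw⟩
    have key : (↑w : MonoidAlgebra ℤ G) *
        (of ℤ G (h ^ (-j)) - a * of ℤ G (h ^ (-j))) = 1 := by
      rw [hw, add_mul, mul_sub, mul_sub, ← map_mul, ← zpow_add, add_neg_cancel, zpow_zero,
        map_one, (ha.mul_of_zpow (-j)).of_zpow_mul j, ha.mul_eq_zero (ha.mul_of_zpow (-j)),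
        sub_zero]
      abel
    refine ⟨-j, -(a * of ℤ G (h ^ (-j))), (ha.mul_of_zpow (-j)).neg, ?_⟩
    rw [Units.inv_eq_of_mul_eq_one_right key, sub_eq_add_neg]

/-- The exponent of a unit in `Kgrp h`. -/
noncomputable def expOf (w : Kgrp h) : ℤ := Classical.choose w.2

lemma expOf_spec (w : Kgrp h) :
    ∃ a, Jmem h a ∧ ((w : (MonoidAlgebra ℤ G)ˣ) : MonoidAlgebra ℤ G) =
      of ℤ G (h ^ expOf h w) + a :=
  Classical.choose_spec w.2

/-- The homomorphism `Kgrp h → G` picking out `h^j`. -/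
noncomputable def Kexp : Kgrp h →* G where
  toFun w := h ^ expOf h w
  map_one' := by
    show h ^ expOf h 1 = 1
    obtain ⟨a, ha, hrep⟩ := expOf_spec h 1
    have h1 : ((1 : Kgrp h) : (MonoidAlgebra ℤ G)ˣ) = (1 : (MonoidAlgebra ℤ G)ˣ) := rfl
    rw [h1, Units.val_one] at hrep
    have : of ℤ G (h ^ expOf h 1) + a = of ℤ G (h ^ (0 : ℤ)) + 0 := by
      rw [zpow_zero, map_one, add_zero, ← hrep]
    rw [exp_unique ha Jmem.zero this, zpow_zero]
  map_mul' := by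
    intro w1 w2
    show h ^ expOf h (w1 * w2) = h ^ expOf h w1 * h ^ expOf h w2
    obtain ⟨a, ha, h1⟩ := expOf_spec h w1
    obtain ⟨b, hb, h2⟩ := expOf_spec h w2
    obtain ⟨c, hc, h12⟩ := expOf_spec h (w1 * w2)
    have hval : ((w1 * w2 : Kgrp h) : (MonoidAlgebra ℤ G)ˣ) =
        (w1 : (MonoidAlgebra ℤ G)ˣ) * (w2 : (MonoidAlgebra ℤ G)ˣ) := rfl
    have key : of ℤ G (h ^ expOf h (w1 * w2)) + c =
        of ℤ G (h ^ (expOf h w1 + expOf h w2)) + (a * of ℤ G (h ^ expOf h w2) + b) := by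
      rw [← h12, hval, Units.val_mul, h1, h2, mul_repr ha hb]
    have := exp_unique hc ((ha.mul_of_zpow _).add hb) key
    rw [this, zpow_add]

end aux

/-- Proposition 3.2 (second part): for the Bovdi unit `u = b_k(h̃,g)` and the bicyclic unit
`v = b(h̃,g) = 1 + h̃·g·(1-h)`, the subgroup `⟨u, u^v⟩` of `U(ℤG)` is abelian-by-finite
and solvable of derived length at most `2`. -/
theorem stmt_9 {G : Type*} [Group G] [Fintype G] (g h : G) (k : ℕ) (hk : 0 < k)
    (u v : (MonoidAlgebra ℤ G)ˣ)
    (hu : (↑u : MonoidAlgebra ℤ G) = bovdiR ℤ g h k)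
    (hv : (↑v : MonoidAlgebra ℤ G) =
      1 + grpTilde ℤ h * MonoidAlgebra.of ℤ G g * (1 - MonoidAlgebra.of ℤ G h)) :
    (∃ N : Subgroup ↥(Subgroup.closure {u, v⁻¹ * u * v} : Subgroup (MonoidAlgebra ℤ G)ˣ),
        N.Normal ∧ IsMulCommutative N ∧ N.FiniteIndex) ∧
      derivedSeries ↥(Subgroup.closure {u, v⁻¹ * u * v} : Subgroup (MonoidAlgebra ℤ G)ˣ) 2 =
        ⊥ := by
  classical
  have hu' : u ∈ Kgrp h := by
    refine ⟨(k : ℤ), grpTilde ℤ h * MonoidAlgebra.of ℤ G g * (1 - MonoidAlgebra.of ℤ G h),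
      Jmem.base _, ?_⟩
    rw [hu, zpow_natCast]; rfl
  have hv' : v ∈ Kgrp h := by
    refine ⟨0, grpTilde ℤ h * MonoidAlgebra.of ℤ G g * (1 - MonoidAlgebra.of ℤ G h),
      Jmem.base _, ?_⟩
    rw [hv, zpow_zero, map_one]
  have hle : (Subgroup.closure {u, v⁻¹ * u * v} : Subgroup (MonoidAlgebra ℤ G)ˣ) ≤ Kgrp h := by
    rw [Subgroup.closure_le]
    rintro x (rfl | rfl)
    · exact hu'
    · exact (Kgrp h).mul_mem ((Kgrp h).mul_mem ((Kgrp h).inv_mem hv') hu') hv'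
  set H := (Subgroup.closure {u, v⁻¹ * u * v} : Subgroup (MonoidAlgebra ℤ G)ˣ) with hH
  let φ : H →* G := (Kexp h).comp (Subgroup.inclusion hle)
  -- kernel elements have the form 1 + a with a ∈ J
  have kerRep : ∀ x : H, x ∈ φ.ker → ∃ a, Jmem h a ∧
      ((x : (MonoidAlgebra ℤ G)ˣ) : MonoidAlgebra ℤ G) = 1 + a := by
    intro x hx
    obtain ⟨a, ha, hrep⟩ := expOf_spec h (Subgroup.inclusion hle x)
    have hx1 : h ^ expOf h (Subgroup.inclusion hle x) = 1 := hx
    rw [hx1, map_one] at hrep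
    exact ⟨a, ha, hrep⟩
  have commKer : ∀ x y : H, x ∈ φ.ker → y ∈ φ.ker → x * y = y * x := by
    intro x y hx hy
    obtain ⟨A, hA, hxr⟩ := kerRep x hx
    obtain ⟨B, hB, hyr⟩ := kerRep y hy
    have prod : ∀ (C D : MonoidAlgebra ℤ G), Jmem h C → Jmem h D →
        ((1 : MonoidAlgebra ℤ G) + C) * (1 + D) = 1 + (C + D) := by
      intro C D hC hD
      rw [add_mul, one_mul, mul_add, mul_one, hC.mul_eq_zero hD, add_zero]
      abel
    apply Subtype.ext
    apply Units.ext
    have e1 : ((((x * y : H) : (MonoidAlgebra ℤ G)ˣ)) : MonoidAlgebra ℤ G) =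
        (1 + A) * (1 + B) := by rw [← hxr, ← hyr]; rfl
    have e2 : ((((y * x : H) : (MonoidAlgebra ℤ G)ˣ)) : MonoidAlgebra ℤ G) =
        (1 + B) * (1 + A) := by rw [← hxr, ← hyr]; rfl
    rw [e1, e2, prod A B hA hB, prod B A hB hA, add_comm A B]
  have hzpow : ∀ x : H, ∃ m : ℤ, φ x = h ^ m := fun x => ⟨_, rfl⟩
  constructor
  · refine ⟨φ.ker, MonoidHom.normal_ker φ, ⟨⟨fun a b => Subtype.ext
      (commKer a.1 b.1 a.2 b.2)⟩⟩, ?_⟩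
    exact Subgroup.finiteIndex_ker φ
  · have hD1 : derivedSeries H 1 ≤ φ.ker := by
      rw [derivedSeries_succ, derivedSeries_zero]
      rw [Subgroup.commutator_le]
      intro p _ q _
      rw [MonoidHom.mem_ker, map_commutatorElement]
      obtain ⟨m, hm⟩ := hzpow p
      obtain ⟨m', hm'⟩ := hzpow q
      rw [hm, hm']
      exact commutatorElement_eq_one_iff_commute.mpr ((Commute.refl h).zpow_zpow m m')
    have hD2 : derivedSeries H 2 ≤ ⊥ := by
      show derivedSeries H (1 + 1) ≤ ⊥
      rw [derivedSeries_succ, Subgroup.commutator_le]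
      intro p hp q hq
      rw [Subgroup.mem_bot]
      exact commutatorElement_eq_one_iff_commute.mpr (commKer p q (hD1 hp) (hD1 hq))
    exact le_bot_iff.mp hD2
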